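/- For every integer n ≥ 0, every integer k, every positive integer s, and every real x: E_{n,p,q}^{(k)}(x) = Σ_{l=0}^{n} binom(n,l) · S_2(l+s,s) · Σ_{i=0}^{n−l} (binom(n−l,i)/binom(l+s,s)) · 𝔅_i^{(s)}(x) · E_{n−l−i,p,q}^{(k)}, where E_{j,p,q}^{(k)} = E_{j,p,q}^{(k)}(0) are the (p,q)-poly-Euler numbers. -/

import Mathlib

open Finset

/-- The `(p,q)`-integer `[m]_{p,q} = (p^m - q^m)/(p - q)`. -/
noncomputable def pqInt (p q : ℝ) (m : ℕ) : ℝ := (p ^ m - q ^ m) / (p - q)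

/-- The exponential generating function `∑ f n * t^n / n!` of a sequence `f`. -/
noncomputable def egf (f : ℕ → ℝ) : PowerSeries ℝ :=
  PowerSeries.mk fun n => f n / n.factorial

/-- Formal substitution of a power series `S` with zero constant term into the
`(p,q)`-polylogarithm `Li_{k,p,q}(s) = ∑_{m ≥ 1} s^m / [m]_{p,q}^k`.
(For `m > n` the series `S^m` has zero `n`-th coefficient, so the sum is finite.) -/
noncomputable def pqLi (p q : ℝ) (k : ℤ) (S : PowerSeries ℝ) : PowerSeries ℝ :=
  PowerSeries.mk fun n =>
    ∑ m ∈ Finset.Icc 1 n, PowerSeries.coeff n (S ^ m) / pqInt p q m ^ k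

/-- Stirling numbers of the second kind: the number of partitions of an
`n`-element set into `m` nonempty blocks. -/
def stirling2 : ℕ → ℕ → ℕ
  | 0, 0 => 1
  | 0, _ + 1 => 0
  | _ + 1, 0 => 0
  | n + 1, m + 1 => (m + 1) * stirling2 n (m + 1) + stirling2 n m

lemma stirling2_succ_succ (n m : ℕ) :
    stirling2 (n + 1) (m + 1) = (m + 1) * stirling2 n (m + 1) + stirling2 n m := rfl

lemma stirling2_eq_zero_of_lt : ∀ n s : ℕ, n < s → stirling2 n s = 0
  | 0, 0, h => absurd h (lt_irrefl 0)
  | 0, _ + 1, _ => rfl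
  | n + 1, 0, h => absurd h (Nat.not_lt_zero _)
  | n + 1, m + 1, h => by
      rw [stirling2_succ_succ, stirling2_eq_zero_of_lt n (m + 1) (by omega),
        stirling2_eq_zero_of_lt n m (by omega)]
      ring

lemma derivative_exp : PowerSeries.derivativeFun (PowerSeries.exp ℝ) = PowerSeries.exp ℝ := by
  ext n
  show PowerSeries.coeff n (PowerSeries.derivative ℝ (PowerSeries.exp ℝ)) = _
  rw [PowerSeries.coeff_derivative, PowerSeries.coeff_exp, PowerSeries.coeff_exp]
  simp only [map_div₀, map_one, map_natCast]
  rw [Nat.factorial_succ]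
  push_cast
  have h1 : (n.factorial : ℝ) ≠ 0 := Nat.cast_ne_zero.mpr n.factorial_ne_zero
  field_simp

lemma coeff_expSubOne_pow (n : ℕ) : ∀ s : ℕ,
    PowerSeries.coeff n ((PowerSeries.exp ℝ - 1) ^ s) =
      (s.factorial : ℝ) * (stirling2 n s : ℝ) / n.factorial := by
  induction n with
  | zero =>
    intro s
    rw [PowerSeries.coeff_zero_eq_constantCoeff, map_pow, map_sub, map_one,
      PowerSeries.constantCoeff_exp, sub_self]
    cases s with
    | zero => simp [stirling2]
    | succ m => simp [stirling2, zero_pow]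
  | succ n ih =>
    intro s
    cases s with
    | zero =>
      simp only [pow_zero, PowerSeries.coeff_one, Nat.succ_ne_zero, if_false]
      simp [stirling2]
    | succ m =>
      -- use the derivative: D ((exp-1)^(m+1)) = (m+1) • (exp-1)^m • exp
      have hD : PowerSeries.derivative ℝ ((PowerSeries.exp ℝ - 1) ^ (m + 1)) =
          (m + 1) • (PowerSeries.exp ℝ - 1) ^ m • PowerSeries.derivative ℝ
            (PowerSeries.exp ℝ - 1) := by
        simpa using Derivation.leibniz_pow (PowerSeries.derivative ℝ)
          (a := PowerSeries.exp ℝ - 1) (m + 1)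
      have hDe : PowerSeries.derivative ℝ (PowerSeries.exp ℝ - 1) = PowerSeries.exp ℝ := by
        have h1 : PowerSeries.derivative ℝ (PowerSeries.exp ℝ - 1) =
            PowerSeries.derivative ℝ (PowerSeries.exp ℝ) -
              PowerSeries.derivative ℝ (1 : PowerSeries ℝ) := map_sub _ _ _
        have h2 : PowerSeries.derivative ℝ (1 : PowerSeries ℝ) = 0 :=
          (PowerSeries.derivative ℝ).map_one_eq_zero
        have h3 : PowerSeries.derivative ℝ (PowerSeries.exp ℝ) = PowerSeries.exp ℝ := by
          ext j
          rw [PowerSeries.coeff_derivative]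
          have := congrArg (PowerSeries.coeff j) derivative_exp
          exact (PowerSeries.coeff_derivative _ _).symm.trans this
        rw [h1, h2, h3, sub_zero]
      rw [hDe] at hD
      -- (exp-1)^m • exp = (exp-1)^(m+1) + (exp-1)^m
      have hprod : (PowerSeries.exp ℝ - 1) ^ m • PowerSeries.exp ℝ =
          (PowerSeries.exp ℝ - 1) ^ (m + 1) + (PowerSeries.exp ℝ - 1) ^ m := by
        rw [smul_eq_mul, pow_succ]
        ring
      rw [hprod] at hD
      have hcoeff : PowerSeries.coeff (n + 1) ((PowerSeries.exp ℝ - 1) ^ (m + 1)) *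
          (n + 1) =
          ((m : ℝ) + 1) * (PowerSeries.coeff n ((PowerSeries.exp ℝ - 1) ^ (m + 1)) +
            PowerSeries.coeff n ((PowerSeries.exp ℝ - 1) ^ m)) := by
        have h := congrArg (PowerSeries.coeff n) hD
        rw [PowerSeries.coeff_derivative, map_nsmul, map_add, nsmul_eq_mul] at h
        rw [h]
        push_cast
        ring
      rw [ih (m + 1), ih m] at hcoeff
      have hn1 : ((n : ℝ) + 1) ≠ 0 := by positivity
      have hnf : ((n.factorial : ℝ)) ≠ 0 := Nat.cast_ne_zero.mpr n.factorial_ne_zero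
      have hkey : PowerSeries.coeff (n + 1) ((PowerSeries.exp ℝ - 1) ^ (m + 1)) =
          ((m : ℝ) + 1) * ((m + 1).factorial * stirling2 n (m + 1) / n.factorial +
            m.factorial * stirling2 n m / n.factorial) / (n + 1) := by
        field_simp at hcoeff ⊢
        linarith [hcoeff]
      rw [hkey, stirling2_succ_succ, Nat.factorial_succ (m), Nat.factorial_succ n]
      push_cast
      field_simp

lemma expSubOne_pow_eq (s : ℕ) :
    (PowerSeries.exp ℝ - 1) ^ s =
      (PowerSeries.X : PowerSeries ℝ) ^ s *
        egf (fun l => (stirling2 (l + s) s : ℝ) / ((l + s).choose s : ℝ)) := by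
  ext n
  rw [coeff_expSubOne_pow n s]
  rcases lt_or_ge n s with h | h
  · rw [PowerSeries.coeff_X_pow_mul' _ s n, if_neg (by omega),
      stirling2_eq_zero_of_lt n s h]
    simp
  · obtain ⟨l, rfl⟩ := Nat.exists_eq_add_of_le h
    rw [add_comm s l, PowerSeries.coeff_X_pow_mul]
    rw [egf, PowerSeries.coeff_mk]
    have hfactN : (l + s).choose s * s.factorial * l.factorial = (l + s).factorial := by
      have := Nat.choose_mul_factorial_mul_factorial (n := l + s) (k := s) (by omega)
      simpa [Nat.add_sub_cancel] using this
    have hfact : ((l + s).choose s : ℝ) * s.factorial * l.factorial =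
        ((l + s).factorial : ℝ) := by exact_mod_cast congrArg (Nat.cast : ℕ → ℝ) hfactN
    have h1 : ((l + s).choose s : ℝ) ≠ 0 :=
      Nat.cast_ne_zero.mpr (Nat.choose_pos (by omega : s ≤ l + s)).ne'
    have h2 : ((l + s).factorial : ℝ) ≠ 0 := Nat.cast_ne_zero.mpr (l + s).factorial_ne_zero
    have h3 : (l.factorial : ℝ) ≠ 0 := Nat.cast_ne_zero.mpr l.factorial_ne_zero
    have h4 : (s.factorial : ℝ) ≠ 0 := Nat.cast_ne_zero.mpr s.factorial_ne_zero
    rw [← hfact]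
    field_simp

lemma egf_mul (f g : ℕ → ℝ) :
    egf f * egf g =
      egf (fun n => ∑ l ∈ Finset.range (n + 1), (n.choose l : ℝ) * f l * g (n - l)) := by
  ext n
  rw [PowerSeries.coeff_mul, egf, egf, egf, PowerSeries.coeff_mk,
    Finset.Nat.sum_antidiagonal_eq_sum_range_succ
      (fun a b => PowerSeries.coeff a (PowerSeries.mk fun m => f m / m.factorial) *
        PowerSeries.coeff b (PowerSeries.mk fun m => g m / m.factorial)) n,
    Finset.sum_div]
  refine Finset.sum_congr rfl fun l hl => ?_
  rw [Finset.mem_range] at hl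
  have hle : l ≤ n := by omega
  rw [PowerSeries.coeff_mk, PowerSeries.coeff_mk]
  have hfact : (n.choose l : ℝ) * l.factorial * (n - l).factorial = (n.factorial : ℝ) := by
    exact_mod_cast congrArg (Nat.cast : ℕ → ℝ)
      (Nat.choose_mul_factorial_mul_factorial hle)
  have h1 : (l.factorial : ℝ) ≠ 0 := Nat.cast_ne_zero.mpr l.factorial_ne_zero
  have h2 : ((n - l).factorial : ℝ) ≠ 0 := Nat.cast_ne_zero.mpr (n - l).factorial_ne_zero
  have h3 : (n.factorial : ℝ) ≠ 0 := Nat.cast_ne_zero.mpr n.factorial_ne_zero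
  have h0 : (n.choose l : ℝ) ≠ 0 := Nat.cast_ne_zero.mpr (Nat.choose_pos hle).ne'
  rw [div_mul_div_comm, ← hfact]
  field_simp

theorem pqPolyEuler_eq_sum_stirling2_bernoulli_higher_order
    (p q : ℝ) (hq : 0 < q) (hqp : q < p) (hp : p ≤ 1) (k : ℤ)
    (E : ℝ → ℕ → ℝ)
    (hE : ∀ x : ℝ,
      2 * pqLi p q k (1 - PowerSeries.rescale (-1) (PowerSeries.exp ℝ)) *
          PowerSeries.rescale x (PowerSeries.exp ℝ) =
        (1 + PowerSeries.exp ℝ) * egf (E x))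
    (s : ℕ) (hs : 1 ≤ s)
    (B : ℝ → ℕ → ℝ)
    (hB : ∀ x : ℝ,
      (PowerSeries.X : PowerSeries ℝ) ^ s * PowerSeries.rescale x (PowerSeries.exp ℝ) =
        (PowerSeries.exp ℝ - 1) ^ s * egf (B x)) :
    ∀ (n : ℕ) (x : ℝ),
      E x n =
        ∑ l ∈ Finset.range (n + 1),
          (n.choose l : ℝ) * (stirling2 (l + s) s : ℝ) *
            ∑ i ∈ Finset.range (n - l + 1),
              (((n - l).choose i : ℝ) / ((l + s).choose s : ℝ)) * B x i * E 0 (n - l - i) := by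
  intro n x
  -- step 1: egf (E x) = egf (E 0) * rescale x exp
  have hunit : (1 + PowerSeries.exp ℝ : PowerSeries ℝ) ≠ 0 := by
    intro h
    have := congrArg (PowerSeries.constantCoeff) h
    simp [PowerSeries.constantCoeff_exp] at this
  have hE0 : 2 * pqLi p q k (1 - PowerSeries.rescale (-1) (PowerSeries.exp ℝ)) =
      (1 + PowerSeries.exp ℝ) * egf (E 0) := by
    have h := hE 0
    rwa [PowerSeries.rescale_zero, RingHom.comp_apply, PowerSeries.constantCoeff_exp,
      map_one, mul_one] at h
  have step1 : egf (E x) = egf (E 0) * PowerSeries.rescale x (PowerSeries.exp ℝ) := by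
    have h := hE x
    rw [hE0] at h
    apply mul_left_cancel₀ hunit
    rw [← h]; ring
  -- step 2: rescale x exp = egf c * egf (B x)
  set c : ℕ → ℝ := fun l => (stirling2 (l + s) s : ℝ) / ((l + s).choose s : ℝ) with hc
  have hXs : ((PowerSeries.X : PowerSeries ℝ) ^ s) ≠ 0 :=
    pow_ne_zero _ PowerSeries.X_ne_zero
  have step2 : PowerSeries.rescale x (PowerSeries.exp ℝ) = egf c * egf (B x) := by
    apply mul_left_cancel₀ hXs
    rw [hB x, expSubOne_pow_eq s]
    ring
  -- combine
  have key : egf (E x) = egf c * (egf (B x) * egf (E 0)) := by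
    rw [step1, step2]; ring
  rw [egf_mul (B x) (E 0), egf_mul c _] at key
  have hco := congrArg (PowerSeries.coeff n) key
  rw [egf, egf, PowerSeries.coeff_mk, PowerSeries.coeff_mk] at hco
  have h3 : (n.factorial : ℝ) ≠ 0 := Nat.cast_ne_zero.mpr n.factorial_ne_zero
  have hEn : E x n = ∑ l ∈ Finset.range (n + 1), (n.choose l : ℝ) * c l *
      ∑ i ∈ Finset.range (n - l + 1),
        ((n - l).choose i : ℝ) * B x i * E 0 (n - l - i) := by
    field_simp at hco
    exact hco
  rw [hEn]
  refine Finset.sum_congr rfl fun l _ => ?_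
  rw [hc]
  rw [Finset.mul_sum, Finset.mul_sum]
  refine Finset.sum_congr rfl fun i _ => ?_
  ring
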